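/- Let k > 0, θ > 0, r > 0. Let X be a real random variable distributed as Gamma(k, θ), and let ε be a square-integrable real random variable independent of X with E[ε] = 1 and Var(ε) = v. Set Y = r·X·(1−X)·ε. If E[Y] = E[X] and Var(Y) = Var(X), then v·(k + 2) ≤ 1; in particular k ≤ 1/v − 2 when v > 0, and v ≤ 1/2. -/

import Mathlib

open MeasureTheory ProbabilityTheory Real Set
open scoped ENNReal NNReal

namespace Stmt8Aux

lemma Gamma_add_nat (a : ℝ) (ha : 0 < a) (n : ℕ) :
    Real.Gamma (a + n) = (∏ i ∈ Finset.range n, (a + i)) * Real.Gamma a := by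
  induction n with
  | zero => simp
  | succ n ih =>
    have h1 : a + ((n : ℕ) + 1 : ℕ) = (a + n) + 1 := by push_cast; ring
    rw [h1, Real.Gamma_add_one (by positivity : (0:ℝ) < a + n).ne', ih,
      Finset.prod_range_succ]
    ring

lemma integrableOn_rpow_exp {a r : ℝ} (ha : 0 < a) (hr : 0 < r) :
    IntegrableOn (fun x : ℝ => x ^ (a - 1) * Real.exp (-(r * x))) (Ioi (0:ℝ)) := by
  have h0 := Real.GammaIntegral_convergent ha
  have h1 : IntegrableOn (fun x : ℝ => Real.exp (-(r * x)) * (r * x) ^ (a - 1))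
      (Ioi (0:ℝ)) := by
    have := (integrableOn_Ioi_comp_mul_left_iff
        (fun x : ℝ => Real.exp (-x) * x ^ (a - 1)) 0 hr).mpr (by simpa using h0)
    simpa using this
  have h2 := h1.const_mul ((r : ℝ) ^ (a - 1))⁻¹
  apply IntegrableOn.congr_fun h2 ?_ measurableSet_Ioi
  intro x hx
  have hx0 : (0:ℝ) < x := hx
  have hrp : (0:ℝ) < r ^ (a - 1) := Real.rpow_pos_of_pos hr _
  simp only
  rw [Real.mul_rpow hr.le hx0.le]
  field_simp

lemma gamma_moment (a r : ℝ) (ha : 0 < a) (hr : 0 < r) (n : ℕ) :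
    Integrable (fun x : ℝ => x ^ n) (gammaMeasure a r) ∧
      ∫ x, x ^ n ∂(gammaMeasure a r)
        = (∏ i ∈ Finset.range n, (a + i)) / r ^ n := by
  have hGa : 0 < Real.Gamma a := Real.Gamma_pos_of_pos ha
  have han : (0:ℝ) < a + n := by positivity
  set G : ℝ → ℝ := fun x =>
    r ^ a / Real.Gamma a * (x ^ (a + n - 1) * Real.exp (-(r * x))) with hGdef
  have hInt : IntegrableOn G (Ioi (0:ℝ)) :=
    (integrableOn_rpow_exp han hr).const_mul _
  have hpdf_meas : Measurable (gammaPDF a r) :=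
    (measurable_gammaPDFReal a r).ennreal_ofReal
  have hlt : ∀ᵐ x ∂(volume : Measure ℝ), gammaPDF a r x < ⊤ :=
    ae_of_all _ fun x => ENNReal.ofReal_lt_top
  have h0 : ∀ᵐ x : ℝ ∂volume, x ≠ 0 := by
    refine compl_mem_ae_iff.mpr ?_
    exact measure_singleton (0:ℝ)
  have hFeq : (fun x : ℝ => x ^ n * (gammaPDF a r x).toReal)
      =ᵐ[volume] Set.indicator (Ioi 0) G := by
    filter_upwards [h0] with x hx
    rcases hx.lt_or_gt with hneg | hpos
    · rw [gammaPDF_of_neg hneg, Set.indicator_of_notMem (by simpa using hneg.le)]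
      simp
    · rw [gammaPDF_of_nonneg hpos.le, Set.indicator_of_mem (by exact hpos),
        ENNReal.toReal_ofReal (by positivity)]
      have hx1 : x ^ (a + n - 1) = x ^ (a - 1) * x ^ n := by
        rw [show a + (n:ℝ) - 1 = (a - 1) + n by ring, Real.rpow_add hpos,
          Real.rpow_natCast]
      rw [hGdef]
      simp only
      rw [hx1]
      ring
  have hIndInt : Integrable (Set.indicator (Ioi (0:ℝ)) G) volume :=
    (integrable_indicator_iff measurableSet_Ioi).mpr hInt
  have hFint : Integrable (fun x : ℝ => x ^ n * (gammaPDF a r x).toReal) volume :=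
    hIndInt.congr hFeq.symm
  constructor
  · rw [gammaMeasure]
    exact (integrable_withDensity_iff hpdf_meas hlt).mpr hFint
  · rw [gammaMeasure]
    have hmeas' : Measurable fun x : ℝ => (gammaPDFReal a r x).toNNReal :=
      (measurable_gammaPDFReal a r).real_toNNReal
    have hwd : volume.withDensity (gammaPDF a r)
        = volume.withDensity (fun x => ((gammaPDFReal a r x).toNNReal : ℝ≥0∞)) := rfl
    rw [hwd, integral_withDensity_eq_integral_smul hmeas']
    have hsmul : (fun x : ℝ => (gammaPDFReal a r x).toNNReal • x ^ n)
        = fun x : ℝ => x ^ n * (gammaPDF a r x).toReal := by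
      funext x
      rw [NNReal.smul_def, smul_eq_mul, mul_comm]
      congr 1
    rw [hsmul, integral_congr_ae hFeq, integral_indicator measurableSet_Ioi, hGdef]
    simp only
    rw [MeasureTheory.integral_const_mul]
    have harg : ∫ x in Ioi (0:ℝ), x ^ (a + n - 1) * Real.exp (-(r * x))
        = (1 / r) ^ (a + (n:ℝ)) * Real.Gamma (a + n) := by
      have := integral_rpow_mul_exp_neg_mul_Ioi han hr
      simpa using this
    rw [harg, Gamma_add_nat a ha n]
    rw [div_rpow (by norm_num) hr.le, one_rpow, Real.rpow_add hr, Real.rpow_natCast]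
    have h1 : r ^ a ≠ 0 := (Real.rpow_pos_of_pos hr a).ne'
    have h2 : r ^ n ≠ 0 := (pow_pos hr n).ne'
    field_simp

end Stmt8Aux


set_option maxHeartbeats 1000000 in
theorem stmt8 {Ω : Type*} {mΩ : MeasurableSpace Ω} (μ : Measure Ω) [IsProbabilityMeasure μ]
    (k θ r v : ℝ) (hk : 0 < k) (hθ : 0 < θ) (hr : 0 < r)
    (X ε : Ω → ℝ) (hXm : Measurable X)
    (hX : Measure.map X μ = gammaMeasure k θ⁻¹)
    (hε : MemLp ε 2 μ) (hindep : IndepFun ε X μ)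
    (hεmean : ∫ ω, ε ω ∂μ = 1) (hεvar : variance ε μ = v)
    (Y : Ω → ℝ) (hY : Y = fun ω => r * X ω * (1 - X ω) * ε ω)
    (hmean : ∫ ω, Y ω ∂μ = ∫ ω, X ω ∂μ) (hvar : variance Y μ = variance X μ) :
    v * (k + 2) ≤ 1 ∧ (0 < v → k ≤ 1 / v - 2) ∧ v ≤ 1 / 2 := by
  have hθi : (0:ℝ) < θ⁻¹ := by positivity
  -- moments of X
  have hmom := fun n => Stmt8Aux.gamma_moment k θ⁻¹ hk hθi n
  have hXint : ∀ n : ℕ, Integrable (fun ω => X ω ^ n) μ := by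
    intro n
    have h1 : Integrable (fun x : ℝ => x ^ n) (Measure.map X μ) := by
      rw [hX]; exact (hmom n).1
    exact (integrable_map_measure
      (measurable_id.pow_const n).aestronglyMeasurable hXm.aemeasurable).mp h1
  have hXmom : ∀ n : ℕ, ∫ ω, X ω ^ n ∂μ
      = (∏ i ∈ Finset.range n, (k + i)) * θ ^ n := by
    intro n
    have h1 : ∫ ω, X ω ^ n ∂μ = ∫ x, x ^ n ∂(Measure.map X μ) :=
      (integral_map hXm.aemeasurable
        (measurable_id.pow_const n).aestronglyMeasurable).symm
    rw [h1, hX, (hmom n).2, inv_pow]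
    field_simp
  -- explicit moments
  have hm1 : ∫ ω, X ω ^ 1 ∂μ = k * θ := by
    rw [hXmom]; simp
  have hm2 : ∫ ω, X ω ^ 2 ∂μ = k * (k+1) * θ ^ 2 := by
    rw [hXmom]; simp [Finset.prod_range_succ]
  have hm3 : ∫ ω, X ω ^ 3 ∂μ = k * (k+1) * (k+2) * θ ^ 3 := by
    rw [hXmom]; simp [Finset.prod_range_succ]
  have hm4 : ∫ ω, X ω ^ 4 ∂μ = k * (k+1) * (k+2) * (k+3) * θ ^ 4 := by
    rw [hXmom]; simp [Finset.prod_range_succ]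
  have hm1' : ∫ ω, X ω ∂μ = k * θ := by
    rw [← hm1]; simp
  -- the factor G
  set G : Ω → ℝ := fun ω => r * X ω * (1 - X ω) with hGdef
  have hgmeas : Measurable fun x : ℝ => r * x * (1 - x) := by fun_prop
  have hGmeas : Measurable G := by fun_prop
  have hGeq : G = fun ω => r * X ω ^ 1 - r * X ω ^ 2 := by
    funext ω; simp only [hGdef]; ring
  have hG2eq : (fun ω => G ω ^ 2)
      = fun ω => (r^2 * X ω ^ 2 - 2*r^2 * X ω ^ 3) + r^2 * X ω ^ 4 := by
    funext ω; simp only [hGdef]; ring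
  have hGint : Integrable G μ := by
    rw [hGeq]
    exact ((hXint 1).const_mul r).sub ((hXint 2).const_mul r)
  have hG2int : Integrable (fun ω => G ω ^ 2) μ := by
    rw [hG2eq]
    exact (((hXint 2).const_mul _).sub ((hXint 3).const_mul _)).add
      ((hXint 4).const_mul _)
  have hEG : ∫ ω, G ω ∂μ = r * (k*θ) - r * (k*(k+1)*θ^2) := by
    rw [hGeq, integral_sub ((hXint 1).const_mul r) ((hXint 2).const_mul r),
      MeasureTheory.integral_const_mul, MeasureTheory.integral_const_mul, hm1, hm2]
  have hEG2 : ∫ ω, G ω ^ 2 ∂μ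
      = (r^2 * (k*(k+1)*θ^2) - 2*r^2 * (k*(k+1)*(k+2)*θ^3))
        + r^2 * (k*(k+1)*(k+2)*(k+3)*θ^4) := by
    have i23 : Integrable (fun ω => r^2 * X ω ^ 2 - 2*r^2 * X ω ^ 3) μ :=
      ((hXint 2).const_mul _).sub ((hXint 3).const_mul _)
    rw [hG2eq, integral_add i23 ((hXint 4).const_mul _),
      integral_sub ((hXint 2).const_mul _) ((hXint 3).const_mul _),
      MeasureTheory.integral_const_mul, MeasureTheory.integral_const_mul,
      MeasureTheory.integral_const_mul, hm2, hm3, hm4]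
  -- ε facts
  have hεint : Integrable ε μ := hε.integrable one_le_two
  have hε2int : Integrable (fun ω => ε ω ^ 2) μ := hε.integrable_sq
  have hv0 : 0 ≤ v := hεvar ▸ variance_nonneg ε μ
  have hε2val : ∫ ω, ε ω ^ 2 ∂μ = v + 1 := by
    have h := variance_eq_sub hε
    simp only [Pi.pow_apply] at h
    rw [hεvar, hεmean] at h
    linarith
  -- independence
  have hGε : IndepFun G ε μ := by
    have := (hindep.symm).comp hgmeas measurable_id
    exact this
  have hG2ε2 : IndepFun (fun ω => G ω ^ 2) (fun ω => ε ω ^ 2) μ := by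
    have := (hindep.symm).comp
      (show Measurable fun x : ℝ => (r * x * (1 - x)) ^ 2 by fun_prop)
      (show Measurable fun x : ℝ => x ^ 2 by fun_prop)
    exact this
  -- Y facts
  have hYeq : Y = fun ω => G ω * ε ω := hY
  have hYint : Integrable Y μ := by
    rw [hYeq]; exact hGε.integrable_mul hGint hεint
  have hY2int : Integrable (fun ω => Y ω ^ 2) μ := by
    have h : (fun ω => Y ω ^ 2) = fun ω => G ω ^ 2 * ε ω ^ 2 := by
      funext ω; rw [hYeq]; ring
    rw [h]
    exact hG2ε2.integrable_mul hG2int hε2int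
  have hEY : ∫ ω, Y ω ∂μ = ∫ ω, G ω ∂μ := by
    rw [hYeq]
    have h := hGε.integral_mul_eq_mul_integral hGint.1 hεint.1
    calc ∫ ω, G ω * ε ω ∂μ = (∫ ω, G ω ∂μ) * ∫ ω, ε ω ∂μ := h
    _ = ∫ ω, G ω ∂μ := by rw [hεmean, mul_one]
  have hEY2 : ∫ ω, Y ω ^ 2 ∂μ = (∫ ω, G ω ^ 2 ∂μ) * (v + 1) := by
    have h : (fun ω => Y ω ^ 2) = fun ω => G ω ^ 2 * ε ω ^ 2 := by
      funext ω; rw [hYeq]; ring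
    rw [h]
    calc ∫ ω, G ω ^ 2 * ε ω ^ 2 ∂μ
        = (∫ ω, G ω ^ 2 ∂μ) * ∫ ω, ε ω ^ 2 ∂μ :=
          hG2ε2.integral_mul_eq_mul_integral hG2int.1 hε2int.1
      _ = (∫ ω, G ω ^ 2 ∂μ) * (v + 1) := by rw [hε2val]
  -- variances
  have hmemX2 : MemLp X 2 μ :=
    (memLp_two_iff_integrable_sq hXm.aestronglyMeasurable).mpr (hXint 2)
  have hYmeas : AEStronglyMeasurable Y μ := by
    rw [hYeq]; exact (hGmeas.aestronglyMeasurable.mul hε.1)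
  have hmemY2 : MemLp Y 2 μ :=
    (memLp_two_iff_integrable_sq hYmeas).mpr hY2int
  have hvarX : variance X μ = k*(k+1)*θ^2 - (k*θ)^2 := by
    have h := variance_eq_sub hmemX2
    simp only [Pi.pow_apply] at h
    rw [h, hm2, hm1']
  have hvarY : variance Y μ = (∫ ω, Y ω ^ 2 ∂μ) - (∫ ω, Y ω ∂μ)^2 := by
    have h := variance_eq_sub hmemY2
    simp only [Pi.pow_apply] at h
    exact h
  -- assemble equations
  have e1 : r * (k*θ) - r * (k*(k+1)*θ^2) = k*θ := by
    rw [← hEG, ← hEY, hmean, hm1']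
  have e2 : ((r^2 * (k*(k+1)*θ^2) - 2*r^2 * (k*(k+1)*(k+2)*θ^3))
        + r^2 * (k*(k+1)*(k+2)*(k+3)*θ^4)) * (v + 1) = k*(k+1)*θ^2 := by
    have h := hvar
    rw [hvarY, hvarX, hEY2, hEY, hEG2, hEG] at h
    have h2 : r * (k*θ) - r * (k*(k+1)*θ^2) = k*θ := e1
    rw [h2] at h
    linarith
  -- pure algebra from here
  have hkθ : (0:ℝ) < k * θ := by positivity
  have hs : r * (1 - (k+1)*θ) = 1 := by
    apply mul_left_cancel₀ hkθ.ne'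
    linear_combination e1
  have hQv : (1 - 2*(k+2)*θ + (k+2)*(k+3)*θ^2) * (v + 1)
      = (1 - (k+1)*θ)^2 := by
    have h3 : r^2 * ((1 - 2*(k+2)*θ + (k+2)*(k+3)*θ^2) * (v + 1)) = 1 := by
      apply mul_left_cancel₀ (show k*(k+1)*θ^2 ≠ 0 by positivity)
      linear_combination e2
    apply mul_left_cancel₀ (show r^2 ≠ 0 by positivity)
    rw [h3]
    nlinarith [hs]
  have hsne : (1 - (k+1)*θ) ≠ 0 := by
    intro h
    rw [h, mul_zero] at hs
    exact one_ne_zero hs.symm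
  have hs2 : 0 < (1 - (k+1)*θ)^2 := by positivity
  have hQpos : 0 < 1 - 2*(k+2)*θ + (k+2)*(k+3)*θ^2 := by nlinarith [hQv, hs2, hv0]
  have goal1 : v * (k + 2) ≤ 1 := by
    have hid : v*(k+2)*(1 - 2*(k+2)*θ + (k+2)*(k+3)*θ^2)
        = (1 - 2*(k+2)*θ + (k+2)*(k+3)*θ^2) - (1 - 2*(k+2)*θ)^2 := by
      linear_combination (k+2) * hQv
    nlinarith [hid, sq_nonneg (1 - 2*(k+2)*θ), hQpos]
  refine ⟨goal1, fun hv => ?_, ?_⟩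
  · have h1 : (k+2) * v ≤ 1 := by linarith [goal1]
    have h2 : k + 2 ≤ 1 / v := (le_div_iff₀ hv).mpr h1
    linarith
  · nlinarith [goal1, hv0, hk]
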